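/- Let G = (V, A) be a finite directed graph, s ∈ V, and C ⊆ V with s ∉ C. Let F ⊆ A be a set of arcs such that: every vertex v ∉ C ∪ {s} is the head of exactly one arc of F; no vertex of C ∪ {s} is the head of any arc of F; and F contains no (undirected) cycle, so that F is a forest. Let H_1, …, H_r be the weakly connected components of the subgraph (V, F), with s ∈ H_1, and let G(F,s) be the directed graph on vertex set {h_1, …, h_r} having an arc (h_j, h_l) for each arc (v, u) ∈ A with v ∈ H_j, u ∈ H_l, and u ∈ C \ {s}. Then the map H′ ↦ H′ ∪ F (identifying each arc of G(F,s) with the arc of A it came from) is a bijection between the set of spanning arborescences of G(F,s) rooted at h_1 and the set of spanning arborescences H of G rooted at s such that for every v ∉ C ∪ {s}, the unique arc of H entering v equals the unique arc of F entering v. -/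

import Mathlib

/-- A spanning arborescence of the directed graph `(V, A)` rooted at `root`: a set `T ⊆ A`
of arcs such that every vertex other than `root` is the head of exactly one arc of `T`,
`root` is the head of no arc of `T`, and every vertex is reachable from `root` by a
directed path using arcs of `T`.  (An arc `(v, u)` has tail `v` and head `u`.) -/
def IsArborescence {V : Type*} (A : Set (V × V)) (root : V) (T : Set (V × V)) : Prop :=
  T ⊆ A ∧
  (∀ v : V, v ≠ root → ∃! a : V × V, a ∈ T ∧ a.2 = v) ∧
  (∀ a ∈ T, a.2 ≠ root) ∧
  (∀ v : V, Relation.ReflTransGen (fun x y => (x, y) ∈ T) root v)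

/-- The undirected graph underlying a set `F` of arcs: `x` and `y` are adjacent iff they
are distinct and `F` contains the arc `(x, y)` or the arc `(y, x)`. -/
def undirected {V : Type*} (F : Set (V × V)) : SimpleGraph V :=
  SimpleGraph.fromRel fun x y => (x, y) ∈ F

/-- The weakly connected component of `v` in the arc set `F`. -/
def weakComp {V : Type*} (F : Set (V × V)) (v : V) : (undirected F).ConnectedComponent :=
  (undirected F).connectedComponentMk v

section AuxContr

variable {V : Type*} {F : Set (V × V)}

lemma auxContr_adj (hFloopless : ∀ a ∈ F, a.1 ≠ a.2) {x y : V} (h : (x, y) ∈ F) :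
    (undirected F).Adj x y := by
  rw [undirected, SimpleGraph.fromRel_adj]
  exact ⟨hFloopless _ h, Or.inl h⟩

lemma auxContr_wc_step (hFloopless : ∀ a ∈ F, a.1 ≠ a.2) {x y : V} (h : (x, y) ∈ F) :
    weakComp F x = weakComp F y :=
  SimpleGraph.ConnectedComponent.sound (auxContr_adj hFloopless h).reachable

lemma auxContr_wc_rtg (hFloopless : ∀ a ∈ F, a.1 ≠ a.2) {x y : V}
    (h : Relation.ReflTransGen (fun a b => (a, b) ∈ F) x y) :
    weakComp F x = weakComp F y := by
  induction h with
  | refl => rfl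
  | tail _ h2 ih => exact ih.trans (auxContr_wc_step hFloopless h2)

/-- Walk avoiding a given arc's edge, built from a directed chain avoiding `v` as
an interior tail. -/
lemma auxContr_walk (hFloopless : ∀ a ∈ F, a.1 ≠ a.2)
    (hFnopair : ∀ a ∈ F, (a.2, a.1) ∉ F) {v w : V} (hvw : (v, w) ∈ F) :
    ∀ (m : List V) (a b : V), List.Chain (fun x y => (x, y) ∈ F) a m →
      (a :: m).getLast (List.cons_ne_nil _ _) = b → v ∉ (a :: m).dropLast →
      ∃ p : (undirected F).Walk a b, s(v, w) ∉ p.edges := by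
  intro m
  induction m with
  | nil =>
    intro a b _ hlast _
    simp only [List.getLast_singleton] at hlast
    subst hlast
    exact ⟨SimpleGraph.Walk.nil, by simp⟩
  | cons c m' ih =>
    intro a b hchain hlast hdrop
    rw [List.Chain, List.chain_cons] at hchain
    obtain ⟨hac, hchain'⟩ := hchain
    have hdrop' : v ∉ (c :: m').dropLast := by
      intro hmem
      exact hdrop (by simpa using Or.inr hmem)
    have hav : a ≠ v := by
      intro h
      exact hdrop (by simp [h])
    have hlast' : (c :: m').getLast (List.cons_ne_nil _ _) = b := by
      rw [← hlast]
      exact (List.getLast_cons_cons).symm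
    obtain ⟨p, hp⟩ := ih c b hchain' hlast' hdrop'
    refine ⟨SimpleGraph.Walk.cons (auxContr_adj hFloopless hac) p, ?_⟩
    simp only [SimpleGraph.Walk.edges_cons, List.mem_cons, not_or]
    refine ⟨?_, hp⟩
    intro he
    rw [Sym2.eq_iff] at he
    rcases he with ⟨h1, h2⟩ | ⟨h1, h2⟩
    · exact hav h1.symm
    · subst h1; subst h2
      exact hFnopair _ hvw hac

/-- No directed cycles in `F`. -/
lemma auxContr_no_dicycle (hFloopless : ∀ a ∈ F, a.1 ≠ a.2)
    (hFnopair : ∀ a ∈ F, (a.2, a.1) ∉ F)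
    (hforest : (undirected F).IsAcyclic) (v : V) :
    ¬ Relation.TransGen (fun x y => (x, y) ∈ F) v v := by
  have key : ∀ n (u : V) (l : List V) (hne : l ≠ []), l.length ≤ n →
      List.Chain (fun x y => (x, y) ∈ F) u l →
      l.getLast hne = u → False := by
    intro n
    induction n with
    | zero =>
      intro u l hne hlen _ _
      exact hne (List.length_eq_zero_iff.mp (Nat.le_zero.mp hlen))
    | succ n ihn =>
      intro u l hne hlen hchain hlast
      by_cases hmem : u ∈ l.dropLast
      · obtain ⟨l1, l2, hsplit⟩ := List.append_of_mem hmem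
        have hl : l = l1 ++ u :: (l2 ++ [l.getLast hne]) := by
          conv_lhs => rw [← List.dropLast_append_getLast hne]
          rw [hsplit]
          simp
        rw [hl, List.Chain, List.isChain_cons_split] at hchain
        have hne1 : l1 ++ [u] ≠ [] := by simp
        have hlast1 : (l1 ++ [u]).getLast hne1 = u := List.getLast_append _
        have hlen1 : (l1 ++ [u]).length ≤ n := by
          have := congrArg List.length hl
          simp at this ⊢
          omega
        exact ihn u (l1 ++ [u]) hne1 hlen1 hchain.1 hlast1
      · -- u not interior: extract bridge contradiction
        rcases l with _ | ⟨w, l'⟩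
        · exact hne rfl
        rw [List.Chain, List.chain_cons] at hchain
        obtain ⟨huw, hchain'⟩ := hchain
        rcases List.eq_nil_or_concat l' with rfl | _
        · have hwu : w = u := by simpa using hlast
          exact hFloopless (u, w) huw hwu.symm
        have hne' : l' ≠ [] := by rintro rfl; simp_all
        have hlast' : (w :: l').getLast (List.cons_ne_nil _ _) = u := by
          exact hlast
        have hdrop : u ∉ (w :: l').dropLast := hmem
        obtain ⟨p, hp⟩ := auxContr_walk hFloopless hFnopair huw l' w u hchain' hlast' hdrop
        have hadj : (undirected F).Adj u w := auxContr_adj hFloopless huw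
        have hbridge := (SimpleGraph.isAcyclic_iff_forall_adj_isBridge.mp hforest) hadj
        rw [SimpleGraph.isBridge_iff] at hbridge
        apply hbridge
        rw [SimpleGraph.reachable_delete_edges_iff_exists_walk]
        refine ⟨p.reverse, ?_⟩
        rwa [SimpleGraph.Walk.edges_reverse, List.mem_reverse]
  intro h
  rw [Relation.TransGen.head'_iff] at h
  obtain ⟨c, hvc, hcv⟩ := h
  obtain ⟨l, hchain, hlast⟩ := List.exists_isChain_cons_of_relationReflTransGen hcv
  exact key (c :: l).length v (c :: l) (List.cons_ne_nil _ _) le_rfl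
    (List.Chain.cons hvc hchain) hlast

lemma auxContr_wf [Finite V] (hFloopless : ∀ a ∈ F, a.1 ≠ a.2)
    (hFnopair : ∀ a ∈ F, (a.2, a.1) ∉ F)
    (hforest : (undirected F).IsAcyclic) :
    WellFounded (fun x y : V => (x, y) ∈ F) := by
  have : IsIrrefl V (Relation.TransGen fun x y : V => (x, y) ∈ F) :=
    ⟨auxContr_no_dicycle hFloopless hFnopair hforest⟩
  exact Subrelation.wf
    (r := Relation.TransGen fun x y : V => (x, y) ∈ F)
    (fun {x y} h => Relation.TransGen.single h)
    (Finite.wellFounded_of_trans_of_irrefl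
      (Relation.TransGen fun x y : V => (x, y) ∈ F))

lemma auxContr_exists_root [Finite V] {C : Set V} {s : V}
    (hFhead : ∀ v : V, v ∉ C ∪ {s} → ∃! a : V × V, a ∈ F ∧ a.2 = v)
    (hFloopless : ∀ a ∈ F, a.1 ≠ a.2)
    (hFnopair : ∀ a ∈ F, (a.2, a.1) ∉ F)
    (hforest : (undirected F).IsAcyclic) (v : V) :
    ∃ r, r ∈ C ∪ {s} ∧ Relation.ReflTransGen (fun x y => (x, y) ∈ F) r v := by
  induction v using WellFounded.induction (auxContr_wf hFloopless hFnopair hforest) with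
  | _ x IH =>
    by_cases hx : x ∈ C ∪ {s}
    · exact ⟨x, hx, Relation.ReflTransGen.refl⟩
    · obtain ⟨a, ⟨haF, ha2⟩, _⟩ := hFhead x hx
      have hstep : (a.1, x) ∈ F := by rw [← ha2]; exact haF
      obtain ⟨r, hr, hchain⟩ := IH a.1 hstep
      exact ⟨r, hr, hchain.tail hstep⟩

/-- A simple path starting at a vertex with no admissible incoming arc from the path's
support is entirely forward-oriented. -/
lemma auxContr_forward (hpar : ∀ a ∈ F, ∀ b ∈ F, a.2 = b.2 → a = b) :
    ∀ {x w : V} (p : (undirected F).Walk x w), p.IsPath →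
      (∀ y, (y, x) ∈ F → y ∉ p.support) →
      Relation.ReflTransGen (fun a b => (a, b) ∈ F) x w := by
  intro x w p
  induction p with
  | nil => exact fun _ _ => Relation.ReflTransGen.refl
  | @cons x z w h q ih =>
    intro hp hcond
    rw [undirected, SimpleGraph.fromRel_adj] at h
    obtain ⟨hne, hor⟩ := h
    rcases hor with hxz | hzx
    · rw [SimpleGraph.Walk.cons_isPath_iff] at hp
      refine Relation.ReflTransGen.head hxz (ih hp.1 ?_)
      intro y hyz
      have : (y, z) = (x, z) := hpar _ hyz _ hxz rfl
      rw [Prod.mk.injEq] at this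
      rw [this.1]
      exact hp.2
    · exact absurd (SimpleGraph.Walk.start_mem_support q) (by
        have := hcond z hzx
        simp only [SimpleGraph.Walk.support_cons, List.mem_cons, not_or] at this
        exact this.2)

lemma auxContr_root_unique [DecidableEq V] {R : Set V} (hpar : ∀ a ∈ F, ∀ b ∈ F, a.2 = b.2 → a = b)
    (hnohead : ∀ a ∈ F, a.2 ∉ R) {u w : V} (hu : u ∈ R) (hw : w ∈ R)
    (hwc : weakComp F u = weakComp F w) : u = w := by
  have hreach : (undirected F).Reachable u w := SimpleGraph.ConnectedComponent.exact hwc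
  obtain ⟨p0⟩ := hreach
  have hfwd := auxContr_forward hpar (p0.toPath : (undirected F).Walk u w)
    p0.toPath.2 (fun y hy _ => hnohead _ hy hu)
  rcases (Relation.reflTransGen_iff_eq_or_transGen.mp hfwd) with h | h
  · exact h.symm
  · rw [Relation.TransGen.tail'_iff] at h
    obtain ⟨c, _, hcw⟩ := h
    exact absurd hw (hnohead _ hcw)

end AuxContr

/-- A spanning arborescence, rooted at the weak component of `s`, of the contracted
multigraph `G(F, s)` whose vertices are the weakly connected components of `(V, F)` and
which has one arc for each arc `a ∈ A` whose head lies in `C \ {s}` (the arc going from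
the component of the tail of `a` to the component of the head of `a`).  A spanning
arborescence is represented by the set `T` of arcs of `A` giving rise to its arcs: every
component other than that of `s` must be the head-component of exactly one arc of `T`, the
component of `s` is the head-component of no arc of `T`, and every component is reachable
from the component of `s` through arcs of `T`. -/
def IsContractedArborescence {V : Type*} (A : Set (V × V)) (s : V) (C : Set V)
    (F : Set (V × V)) (T : Set (V × V)) : Prop :=
  T ⊆ {a ∈ A | a.2 ∈ C \ {s}} ∧
  (∀ q : (undirected F).ConnectedComponent, q ≠ weakComp F s →
    ∃! a : V × V, a ∈ T ∧ weakComp F a.2 = q) ∧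
  (∀ a ∈ T, weakComp F a.2 ≠ weakComp F s) ∧
  (∀ q : (undirected F).ConnectedComponent,
    Relation.ReflTransGen
      (fun x y => ∃ a ∈ T, weakComp F a.1 = x ∧ weakComp F a.2 = y) (weakComp F s) q)

/-- **Reconstruction of missing arcs by contraction.** Let `(V, A)` be a finite directed
graph, `s ∈ V`, `C ⊆ V` with `s ∉ C`, and let `F ⊆ A` be a forest of arcs such that every
vertex outside `C ∪ {s}` is the head of exactly one arc of `F` and no vertex of `C ∪ {s}`
is the head of an arc of `F`.  Then `H' ↦ H' ∪ F` is a bijection between the spanning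
arborescences of the contracted graph `G(F, s)` rooted at the component of `s` and the
spanning arborescences `H` of `(V, A)` rooted at `s` whose arc entering any vertex
`v ∉ C ∪ {s}` is the arc of `F` entering `v`. -/
theorem contracted_arborescence_bijection
    {V : Type*} [Fintype V] [DecidableEq V]
    (A : Set (V × V)) (s : V) (C : Set V) (hs : s ∉ C)
    (F : Set (V × V)) (hFA : F ⊆ A)
    (hFhead : ∀ v : V, v ∉ C ∪ {s} → ∃! a : V × V, a ∈ F ∧ a.2 = v)
    (hFC : ∀ a ∈ F, a.2 ∉ C ∪ {s})
    -- `F` contains no undirected cycle (no loops, no antiparallel pair of arcs, and the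
    -- underlying undirected simple graph is acyclic), i.e. `F` is a forest:
    (hFloopless : ∀ a ∈ F, a.1 ≠ a.2)
    (hFnopair : ∀ a ∈ F, (a.2, a.1) ∉ F)
    (hforest : (undirected F).IsAcyclic) :
    Set.BijOn (fun T => T ∪ F)
      {T : Set (V × V) | IsContractedArborescence A s C F T}
      {H : Set (V × V) | IsArborescence A s H ∧
        ∀ v : V, v ∉ C ∪ {s} → ∀ a ∈ H, a.2 = v → a ∈ F} := by
    -- Uniqueness of the incoming `F`-arc, globally.
  have hpar : ∀ a ∈ F, ∀ b ∈ F, a.2 = b.2 → a = b := by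
    intro a ha b hb hab
    obtain ⟨c, -, hu⟩ := hFhead a.2 (hFC a ha)
    exact (hu a ⟨ha, rfl⟩).trans (hu b ⟨hb, hab.symm⟩).symm
  have hroot : ∀ v : V, ∃ r, r ∈ C ∪ {s} ∧
      Relation.ReflTransGen (fun x y => (x, y) ∈ F) r v :=
    auxContr_exists_root hFhead hFloopless hFnopair hforest
  have huniq : ∀ u w : V, u ∈ C ∪ {s} → w ∈ C ∪ {s} →
      weakComp F u = weakComp F w → u = w :=
    fun u w hu hw h => auxContr_root_unique hpar hFC hu hw h
  have hsC : s ∈ C ∪ {s} := Set.mem_union_right _ rfl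
  refine ⟨?_, ?_, ?_⟩
  · -- MapsTo
    rintro T ⟨hTA, hTuniq, hTs, hTreach⟩
    have hTmem : ∀ a ∈ T, a ∈ A ∧ a.2 ∈ C ∧ a.2 ≠ s := by
      intro a ha
      obtain ⟨h1, h2⟩ := hTA ha
      exact ⟨h1, h2.1, h2.2⟩
    refine ⟨⟨?_, ?_, ?_, ?_⟩, ?_⟩
    · exact Set.union_subset (fun a ha => (hTmem a ha).1) hFA
    · intro v hv
      by_cases hvC : v ∈ C
      · have hq : weakComp F v ≠ weakComp F s :=
          fun h => hv (huniq v s (Set.mem_union_left _ hvC) hsC h)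
        obtain ⟨a, ⟨haT, haq⟩, hau⟩ := hTuniq _ hq
        have ha2 : a.2 = v :=
          huniq a.2 v (Set.mem_union_left _ (hTmem a haT).2.1)
            (Set.mem_union_left _ hvC) haq
        refine ⟨a, ⟨Or.inl haT, ha2⟩, ?_⟩
        rintro b ⟨hb, hb2⟩
        rcases hb with hbT | hbF
        · exact hau b ⟨hbT, by rw [hb2]⟩
        · exact absurd (Set.mem_union_left _ (hb2 ▸ hvC)) (hFC b hbF)
      · have hv' : v ∉ C ∪ {s} := by
          rintro (h | h)
          · exact hvC h
          · exact hv h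
        obtain ⟨a, ⟨haF, ha2⟩, hau⟩ := hFhead v hv'
        refine ⟨a, ⟨Or.inr haF, ha2⟩, ?_⟩
        rintro b ⟨hb, hb2⟩
        rcases hb with hbT | hbF
        · exact absurd (hb2 ▸ (hTmem b hbT).2.1) hvC
        · exact hau b ⟨hbF, hb2⟩
    · rintro a (haT | haF)
      · exact (hTmem a haT).2.2
      · exact fun h => hFC a haF (h ▸ hsC)
    · intro v
      have main : ∀ q, Relation.ReflTransGen
          (fun x y => ∃ a ∈ T, weakComp F a.1 = x ∧ weakComp F a.2 = y) (weakComp F s) q →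
          ∀ u : V, weakComp F u = q →
          Relation.ReflTransGen (fun x y => (x, y) ∈ T ∪ F) s u := by
        intro q hq
        induction hq with
        | refl =>
          intro u hu
          obtain ⟨r, hr, hrv⟩ := hroot u
          have : r = s := huniq r s hr hsC
            ((auxContr_wc_rtg hFloopless hrv).trans hu)
          subst this
          exact Relation.ReflTransGen.mono (fun x y h => Or.inr h) _ _ hrv
        | @tail x y h1 h2 ih =>
          intro u hu
          obtain ⟨a, haT, ha1, ha2⟩ := h2
          obtain ⟨r, hr, hrv⟩ := hroot u
          have hra : r = a.2 := huniq r a.2 hr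
            (Set.mem_union_left _ ((hTA haT).2.1))
            ((auxContr_wc_rtg hFloopless hrv).trans (hu.trans ha2.symm))
          have hs_a1 : Relation.ReflTransGen (fun x y => (x, y) ∈ T ∪ F) s a.1 :=
            ih a.1 ha1
          have hstep : Relation.ReflTransGen (fun x y => (x, y) ∈ T ∪ F) s a.2 :=
            hs_a1.tail (Or.inl (by simpa using haT))
          subst hra
          exact hstep.trans (Relation.ReflTransGen.mono (fun x y h => Or.inr h) _ _ hrv)
      exact main (weakComp F v) (hTreach _) v rfl
    · intro v hv a ha ha2
      rcases ha with haT | haF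
      · exact absurd (Set.mem_union_left _ (ha2 ▸ (hTmem a haT).2.1)) hv
      · exact haF
  · -- InjOn
    intro T1 h1 T2 h2 heq
    have cap : ∀ (T : Set (V × V)), IsContractedArborescence A s C F T →
        ∀ a, a ∈ T ↔ a ∈ T ∪ F ∧ a.2 ∈ C \ {s} := by
      intro T hT a
      constructor
      · exact fun h => ⟨Or.inl h, (hT.1 h).2⟩
      · rintro ⟨(h | h), h2⟩
        · exact h
        · exact absurd (Set.mem_union_left _ h2.1) (hFC a h)
    ext a
    rw [cap T1 h1 a, cap T2 h2 a, show T1 ∪ F = T2 ∪ F from heq]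
  · -- SurjOn
    rintro H ⟨⟨hHA, hHuniq, hHs, hHreach⟩, hHF⟩
    have hFH : F ⊆ H := by
      intro a ha
      have hv : a.2 ∉ C ∪ {s} := hFC a ha
      have hvs : a.2 ≠ s := fun h => hv (h ▸ hsC)
      obtain ⟨b, ⟨hbH, hb2⟩, -⟩ := hHuniq a.2 hvs
      have hbF : b ∈ F := hHF a.2 hv b hbH hb2
      have : a = b := hpar a ha b hbF hb2.symm
      rw [this]; exact hbH
    refine ⟨{a ∈ H | a.2 ∈ C}, ⟨?_, ?_, ?_, ?_⟩, ?_⟩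
    · rintro a ⟨haH, haC⟩
      exact ⟨hHA haH, haC, hHs a haH⟩
    · intro q hq
      obtain ⟨v, hv⟩ := q.exists_rep
      obtain ⟨r, hr, hrv⟩ := hroot v
      have hrq : weakComp F r = q := (auxContr_wc_rtg hFloopless hrv).trans hv
      have hrs : r ≠ s := by
        rintro rfl
        exact hq hrq.symm
      have hrC : r ∈ C := by
        rcases hr with h | h
        · exact h
        · exact absurd h hrs
      obtain ⟨a, ⟨haH, ha2⟩, hau⟩ := hHuniq r hrs
      refine ⟨a, ⟨⟨haH, ha2 ▸ hrC⟩, by rw [ha2]; exact hrq⟩, ?_⟩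
      rintro b ⟨⟨hbH, hbC⟩, hbq⟩
      have hb2 : b.2 = r := huniq b.2 r (Set.mem_union_left _ hbC) hr
        (hbq.trans hrq.symm)
      exact hau b ⟨hbH, hb2⟩
    · rintro a ⟨haH, haC⟩ hwc
      exact (hHs a haH) (huniq a.2 s (Set.mem_union_left _ haC) hsC hwc)
    · intro q
      obtain ⟨v, hv⟩ := q.exists_rep
      have main : ∀ u : V, Relation.ReflTransGen (fun x y => (x, y) ∈ H) s u →
          Relation.ReflTransGen
            (fun x y => ∃ a ∈ {a ∈ H | a.2 ∈ C}, weakComp F a.1 = x ∧ weakComp F a.2 = y)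
            (weakComp F s) (weakComp F u) := by
        intro u hu
        induction hu with
        | refl => exact Relation.ReflTransGen.refl
        | @tail b c h1 h2 ih =>
          by_cases hc : c ∈ C
          · exact ih.tail ⟨(b, c), ⟨h2, hc⟩, rfl, rfl⟩
          · have hc' : c ∉ C ∪ {s} := by
              rintro (h | h)
              · exact hc h
              · exact hHs (b, c) h2 h
            have : (b, c) ∈ F := hHF c hc' (b, c) h2 rfl
            rwa [auxContr_wc_step hFloopless this] at ih
      have := main v (hHreach v)
      rwa [show weakComp F v = q from hv] at this
    · ext a
      simp only [Set.mem_union, Set.mem_setOf_eq, Set.mem_sep_iff]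
      constructor
      · rintro (⟨h, -⟩ | h)
        · exact h
        · exact hFH h
      · intro haH
        by_cases hc : a.2 ∈ C
        · exact Or.inl ⟨haH, hc⟩
        · have hc' : a.2 ∉ C ∪ {s} := by
            rintro (h | h)
            · exact hc h
            · exact hHs a haH h
          exact Or.inr (hHF a.2 hc' a haH rfl)
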